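/- Let k, k' : [0,1] → ℝ be continuous and let N, N' > 0. Let f, g, h : [0,1] → ℝ be solutions on [0,1] of f'' + (k/N)f = 0, g'' + (k'/N')g = 0 and h'' + ((k+k')/(N+N'))h = 0 respectively, each with value 0 at 0 and value 1 at 1, and each positive on (0,1]. Then f(t)^{N}·g(t)^{N'} ≥ h(t)^{N+N'} for all t ∈ [0,1]. -/

import Mathlib

open Set

open Topology Filter

/-- `u` is a (twice continuously differentiable) solution of `u'' + κ·u = 0` on the set `s`,
with first and second derivative functions `u'` and `u''`. -/
def SturmSol (κ u u' u'' : ℝ → ℝ) (s : Set ℝ) : Prop :=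
  (∀ t ∈ s, HasDerivWithinAt u (u' t) s t) ∧
  (∀ t ∈ s, HasDerivWithinAt u' (u'' t) s t) ∧
  ContinuousOn u'' s ∧
  (∀ t ∈ s, u'' t + κ t * u t = 0)

theorem sturm_key_ineq (N N' kk kk' F G H F1 G1 G2 a b : ℝ)
    (hN : 0 < N) (hN' : 0 < N') (hF : 0 < F) (hG : 0 < G) (hH : 0 ≤ H)
    (ha : 0 < a) (hb : 0 < b) :
    ((N/(N+N')) * ((F1*((N/(N+N'))-1)*(a/F/F))*F1*b + (a/F)*(-(kk/N*F))*b
        + (a/F)*F1*(G1*(N'/(N+N'))*(b/G)))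
      + (N'/(N+N')) * ((F1*(N/(N+N'))*(a/F))*(b/G)*G1 + a*(G1*((N'/(N+N'))-1)*(b/G/G))*G1
        + a*(b/G)*(-(kk'/N'*G))))*H
      - (a*b)*(-((kk+kk')/(N+N')*H)) ≤ 0 := by
  have hS : 0 < N + N' := by linarith
  have key : ((N/(N+N')) * ((F1*((N/(N+N'))-1)*(a/F/F))*F1*b + (a/F)*(-(kk/N*F))*b
        + (a/F)*F1*(G1*(N'/(N+N'))*(b/G)))
      + (N'/(N+N')) * ((F1*(N/(N+N'))*(a/F))*(b/G)*G1 + a*(G1*((N'/(N+N'))-1)*(b/G/G))*G1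
        + a*(b/G)*(-(kk'/N'*G))))*H
      - (a*b)*(-((kk+kk')/(N+N')*H))
      = -((N*N')/(N+N')^2 * (F1/F - G1/G)^2 * (a*b*H)) := by
    field_simp
    ring
  rw [key]
  have : 0 ≤ (N*N')/(N+N')^2 * (F1/F - G1/G)^2 * (a*b*H) := by positivity
  linarith

theorem sturm_nebot : (𝓝[Ioc (0:ℝ) 1] 0).NeBot :=
  mem_closure_iff_nhdsWithin_neBot.mp
    (by rw [closure_Ioc (zero_ne_one)]; exact ⟨le_refl 0, zero_le_one⟩)

theorem sturm_slope (u u₁ : ℝ → ℝ)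
    (hd : HasDerivWithinAt u (u₁ 0) (Icc 0 1) 0) (hu0 : u 0 = 0) :
    Filter.Tendsto (fun t => u t / t) (𝓝[Ioc (0:ℝ) 1] 0) (𝓝 (u₁ 0)) := by
  rw [hasDerivWithinAt_iff_tendsto_slope, Icc_diff_left] at hd
  refine hd.congr' ?_
  filter_upwards [self_mem_nhdsWithin] with t ht
  rw [slope_def_field, hu0, sub_zero, sub_zero]

theorem sturm_deriv_pos (κ : ℝ → ℝ) (hκ : ContinuousOn κ (Icc 0 1))
    (u u₁ u₂ : ℝ → ℝ) (hu : SturmSol κ u u₁ u₂ (Icc 0 1))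
    (hu0 : u 0 = 0) (hu1 : u 1 = 1) (hupos : ∀ t ∈ Ioc (0:ℝ) 1, 0 < u t) :
    0 < u₁ 0 := by
  obtain ⟨hd1, hd2, hc2, heq⟩ := hu
  have h01 : (0:ℝ) ∈ Icc (0:ℝ) 1 := ⟨le_refl 0, zero_le_one⟩
  haveI := sturm_nebot
  have hnonneg : 0 ≤ u₁ 0 := by
    refine ge_of_tendsto (sturm_slope u u₁ (hd1 0 h01) hu0) ?_
    filter_upwards [self_mem_nhdsWithin] with t ht
    exact div_nonneg (hupos t ht).le ht.1.le
  rcases hnonneg.lt_or_eq with hlt | heq0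
  · exact hlt
  exfalso
  obtain ⟨M, hM⟩ := (isCompact_Icc.image_of_continuousOn hκ).exists_bound_of_continuousOn
    continuousOn_id
  set K : ℝ := max M 1 with hK
  have hK1 : (1:ℝ) ≤ K := le_max_right _ _
  have hKM : M ≤ K := le_max_left _ _
  set F : ℝ → ℝ × ℝ := fun t => (u t, u₁ t) with hF
  set F' : ℝ → ℝ × ℝ := fun t => (u₁ t, u₂ t) with hF'
  have hFc : ContinuousOn F (Icc 0 1) :=
    ContinuousOn.prodMk (fun t ht => (hd1 t ht).continuousWithinAt)
      (fun t ht => (hd2 t ht).continuousWithinAt)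
  have hFd : ∀ x ∈ Ico (0:ℝ) 1, HasDerivWithinAt F (F' x) (Ici x) x := by
    intro x hx
    have hmem : Icc (0:ℝ) 1 ∈ 𝓝[≥] x := Icc_mem_nhdsGE_of_mem hx
    exact (((hd1 x (Ico_subset_Icc_self hx)).prodMk
      (hd2 x (Ico_subset_Icc_self hx))).mono_of_mem_nhdsWithin hmem)
  have hbound : ∀ x ∈ Ico (0:ℝ) 1, ‖F' x‖ ≤ K * ‖F x‖ + 0 := by
    intro x hx
    have hxI : x ∈ Icc (0:ℝ) 1 := Ico_subset_Icc_self hx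
    have hu2 : u₂ x = -(κ x * u x) := by linarith [heq x hxI]
    have hκx : ‖κ x‖ ≤ M := hM (κ x) ⟨x, hxI, rfl⟩
    have hMnn : 0 ≤ M := le_trans (norm_nonneg _) hκx
    rw [add_zero, Prod.norm_def, Prod.norm_def]
    have h1 : ‖u₁ x‖ ≤ K * max ‖u x‖ ‖u₁ x‖ := by
      calc ‖u₁ x‖ ≤ max ‖u x‖ ‖u₁ x‖ := le_max_right _ _
      _ ≤ K * max ‖u x‖ ‖u₁ x‖ := by
        nlinarith [le_max_left ‖u x‖ ‖u₁ x‖, norm_nonneg (u x), norm_nonneg (u₁ x)]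
    have h2 : ‖u₂ x‖ ≤ K * max ‖u x‖ ‖u₁ x‖ := by
      rw [hu2, norm_neg, norm_mul]
      calc ‖κ x‖ * ‖u x‖ ≤ M * ‖u x‖ := by nlinarith [norm_nonneg (u x)]
      _ ≤ K * max ‖u x‖ ‖u₁ x‖ := by
        nlinarith [le_max_left ‖u x‖ ‖u₁ x‖, norm_nonneg (u x), le_trans hMnn hKM]
    exact max_le h1 h2
  have h0 : ‖F 0‖ ≤ 0 := by
    simp only [hF, Prod.norm_def, hu0, ← heq0]
    simp
  have hg := norm_le_gronwallBound_of_norm_deriv_right_le hFc hFd h0 hbound 1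
    ⟨zero_le_one, le_refl 1⟩
  rw [gronwallBound_ε0, zero_mul] at hg
  have hne : (1:ℝ) ≤ ‖F 1‖ := by
    simp only [hF, Prod.norm_def, hu1]
    exact le_max_of_le_left (by simp)
  linarith


/-- Multiplicativity inequality `σ_{k,N}^{(t)}{}^N · σ_{k',N'}^{(t)}{}^{N'} ≥
σ_{k+k',N+N'}^{(t)}{}^{N+N'}` for the distortion coefficients. -/
theorem distortion_multiplicative
    (k k' : ℝ → ℝ)
    (hk : ContinuousOn k (Icc 0 1)) (hk' : ContinuousOn k' (Icc 0 1))
    (N N' : ℝ) (hN : 0 < N) (hN' : 0 < N')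
    (f f₁ f₂ g g₁ g₂ h h₁ h₂ : ℝ → ℝ)
    (hf : SturmSol (fun t => k t / N) f f₁ f₂ (Icc 0 1))
    (hg : SturmSol (fun t => k' t / N') g g₁ g₂ (Icc 0 1))
    (hh : SturmSol (fun t => (k t + k' t) / (N + N')) h h₁ h₂ (Icc 0 1))
    (hf0 : f 0 = 0) (hf1 : f 1 = 1) (hfpos : ∀ t ∈ Ioc (0:ℝ) 1, 0 < f t)
    (hg0 : g 0 = 0) (hg1 : g 1 = 1) (hgpos : ∀ t ∈ Ioc (0:ℝ) 1, 0 < g t)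
    (hh0 : h 0 = 0) (hh1 : h 1 = 1) (hhpos : ∀ t ∈ Ioc (0:ℝ) 1, 0 < h t) :
    ∀ t ∈ Icc (0:ℝ) 1, h t ^ (N + N') ≤ f t ^ N * g t ^ N' := by
  have hS : 0 < N + N' := by linarith
  -- derivative positivity at 0
  have hf₁0 : 0 < f₁ 0 := sturm_deriv_pos _ (hk.div_const N) f f₁ f₂ hf hf0 hf1 hfpos
  have hg₁0 : 0 < g₁ 0 := sturm_deriv_pos _ (hk'.div_const N') g g₁ g₂ hg hg0 hg1 hgpos
  obtain ⟨hfd1, hfd2, hfc2, hfeq⟩ := hf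
  obtain ⟨hgd1, hgd2, hgc2, hgeq⟩ := hg
  obtain ⟨hhd1, hhd2, hhc2, hheq⟩ := hh
  set α : ℝ := N / (N + N') with hαdef
  set β : ℝ := N' / (N + N') with hβdef
  have hα : 0 < α := div_pos hN hS
  have hβ : 0 < β := div_pos hN' hS
  have hαβ : α + β = 1 := by rw [hαdef, hβdef]; field_simp
  -- continuity
  have hfc : ContinuousOn f (Icc 0 1) := fun t ht => (hfd1 t ht).continuousWithinAt
  have hgc : ContinuousOn g (Icc 0 1) := fun t ht => (hgd1 t ht).continuousWithinAt
  have hhc : ContinuousOn h (Icc 0 1) := fun t ht => (hhd1 t ht).continuousWithinAt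
  have hf₁c : ContinuousOn f₁ (Icc 0 1) := fun t ht => (hfd2 t ht).continuousWithinAt
  have hg₁c : ContinuousOn g₁ (Icc 0 1) := fun t ht => (hgd2 t ht).continuousWithinAt
  have hh₁c : ContinuousOn h₁ (Icc 0 1) := fun t ht => (hhd2 t ht).continuousWithinAt
  set φ : ℝ → ℝ := fun t => f t ^ α * g t ^ β with hφdef
  set φ₁ : ℝ → ℝ := fun t => α * (f t ^ (α-1) * f₁ t * g t ^ β)
      + β * (f t ^ α * g t ^ (β-1) * g₁ t) with hφ₁def
  set W : ℝ → ℝ := fun t => φ₁ t * h t - φ t * h₁ t with hWdef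
  -- pointwise derivative facts at interior points
  have hDeriv : ∀ x ∈ Ioo (0:ℝ) 1, HasDerivAt f (f₁ x) x ∧ HasDerivAt f₁ (f₂ x) x ∧
      HasDerivAt g (g₁ x) x ∧ HasDerivAt g₁ (g₂ x) x ∧
      HasDerivAt h (h₁ x) x ∧ HasDerivAt h₁ (h₂ x) x := by
    intro x hx
    have hmem : Icc (0:ℝ) 1 ∈ 𝓝 x := Icc_mem_nhds hx.1 hx.2
    have hxI : x ∈ Icc (0:ℝ) 1 := Ioo_subset_Icc_self hx
    exact ⟨(hfd1 x hxI).hasDerivAt hmem, (hfd2 x hxI).hasDerivAt hmem,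
      (hgd1 x hxI).hasDerivAt hmem, (hgd2 x hxI).hasDerivAt hmem,
      (hhd1 x hxI).hasDerivAt hmem, (hhd2 x hxI).hasDerivAt hmem⟩
  have hφderiv : ∀ x ∈ Ioo (0:ℝ) 1, HasDerivAt φ (φ₁ x) x := by
    intro x hx
    obtain ⟨hfx, hf1x, hgx, hg1x, hhx, hh1x⟩ := hDeriv x hx
    have hxO : x ∈ Ioc (0:ℝ) 1 := ⟨hx.1, hx.2.le⟩
    have hF : 0 < f x := hfpos x hxO
    have hG : 0 < g x := hgpos x hxO
    have hfA : HasDerivAt (fun y => f y ^ α) (f₁ x * α * f x ^ (α-1)) x :=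
      hfx.rpow_const (Or.inl hF.ne')
    have hgB : HasDerivAt (fun y => g y ^ β) (g₁ x * β * g x ^ (β-1)) x :=
      hgx.rpow_const (Or.inl hG.ne')
    rw [hφdef, hφ₁def]
    refine (hfA.mul hgB).congr_deriv ?_
    ring
  -- derivative of W and its sign
  have hWd : ∀ x ∈ Ioo (0:ℝ) 1, ∃ d ≤ 0, HasDerivAt W d x := by
    intro x hx
    obtain ⟨hfx, hf1x, hgx, hg1x, hhx, hh1x⟩ := hDeriv x hx
    have hxO : x ∈ Ioc (0:ℝ) 1 := ⟨hx.1, hx.2.le⟩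
    have hF : 0 < f x := hfpos x hxO
    have hG : 0 < g x := hgpos x hxO
    have hH : 0 < h x := hhpos x hxO
    have hxI : x ∈ Icc (0:ℝ) 1 := Ioo_subset_Icc_self hx
    have hf2 : f₂ x = -(k x / N * f x) := by linarith [hfeq x hxI]
    have hg2 : g₂ x = -(k' x / N' * g x) := by linarith [hgeq x hxI]
    have hh2 : h₂ x = -((k x + k' x) / (N + N') * h x) := by linarith [hheq x hxI]
    -- hasDerivAt of φ
    have hfA : HasDerivAt (fun y => f y ^ α) (f₁ x * α * f x ^ (α-1)) x :=
      hfx.rpow_const (Or.inl hF.ne')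
    have hfA1 : HasDerivAt (fun y => f y ^ (α-1)) (f₁ x * (α-1) * f x ^ (α-1-1)) x :=
      hfx.rpow_const (Or.inl hF.ne')
    have hgB : HasDerivAt (fun y => g y ^ β) (g₁ x * β * g x ^ (β-1)) x :=
      hgx.rpow_const (Or.inl hG.ne')
    have hgB1 : HasDerivAt (fun y => g y ^ (β-1)) (g₁ x * (β-1) * g x ^ (β-1-1)) x :=
      hgx.rpow_const (Or.inl hG.ne')
    have hφd : HasDerivAt φ (φ₁ x) x := by
      rw [hφdef, hφ₁def]
      refine (hfA.mul hgB).congr_deriv ?_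
      ring
    have hφ₁d : HasDerivAt φ₁
        (α * ((f₁ x * (α-1) * f x ^ (α-1-1) * f₁ x + f x ^ (α-1) * f₂ x) * g x ^ β
            + f x ^ (α-1) * f₁ x * (g₁ x * β * g x ^ (β-1)))
          + β * ((f₁ x * α * f x ^ (α-1) * g x ^ (β-1)
              + f x ^ α * (g₁ x * (β-1) * g x ^ (β-1-1))) * g₁ x
            + f x ^ α * g x ^ (β-1) * g₂ x)) x := by
      rw [hφ₁def]
      exact ((((hfA1.mul hf1x).mul hgB).const_mul α).add
        (((hfA.mul hgB1).mul hg1x).const_mul β))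
    set Φ₂ := α * ((f₁ x * (α-1) * f x ^ (α-1-1) * f₁ x + f x ^ (α-1) * f₂ x) * g x ^ β
            + f x ^ (α-1) * f₁ x * (g₁ x * β * g x ^ (β-1)))
          + β * ((f₁ x * α * f x ^ (α-1) * g x ^ (β-1)
              + f x ^ α * (g₁ x * (β-1) * g x ^ (β-1-1))) * g₁ x
            + f x ^ α * g x ^ (β-1) * g₂ x) with hΦ₂
    refine ⟨Φ₂ * h x - φ x * h₂ x, ?_, ?_⟩
    · -- sign
      have e1 : f x ^ (α-1) = f x ^ α / f x := by
        rw [Real.rpow_sub hF, Real.rpow_one]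
      have e2 : f x ^ (α-1-1) = f x ^ α / f x / f x := by
        rw [Real.rpow_sub hF, Real.rpow_sub hF, Real.rpow_one]
      have e3 : g x ^ (β-1) = g x ^ β / g x := by
        rw [Real.rpow_sub hG, Real.rpow_one]
      have e4 : g x ^ (β-1-1) = g x ^ β / g x / g x := by
        rw [Real.rpow_sub hG, Real.rpow_sub hG, Real.rpow_one]
      have ha : 0 < f x ^ α := Real.rpow_pos_of_pos hF α
      have hb : 0 < g x ^ β := Real.rpow_pos_of_pos hG β
      refine le_trans (le_of_eq ?_) (sturm_key_ineq N N' (k x) (k' x) (f x) (g x) (h x)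
        (f₁ x) (g₁ x) (g₂ x) (f x ^ α) (g x ^ β) hN hN' hF hG hH.le ha hb)
      rw [hΦ₂, hf2, hg2, hh2, e1, e2, e3, e4]
      simp only [hφdef, hαdef, hβdef]
      ring
    · have hd := (hφ₁d.mul hhx).sub (hφd.mul hh1x)
      refine hd.congr_deriv ?_
      ring
  -- continuity of W on Ioc 0 1
  have hWc : ContinuousOn W (Ioc (0:ℝ) 1) := by
    have hsub : Ioc (0:ℝ) 1 ⊆ Icc 0 1 := Ioc_subset_Icc_self
    have hfC := hfc.mono hsub
    have hgC := hgc.mono hsub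
    have hhC := hhc.mono hsub
    have hf₁C := hf₁c.mono hsub
    have hg₁C := hg₁c.mono hsub
    have hh₁C := hh₁c.mono hsub
    have hfne : ∀ x ∈ Ioc (0:ℝ) 1, f x ≠ 0 ∨ (0:ℝ) ≤ α - 1 := fun x hx => Or.inl (hfpos x hx).ne'
    have hgne : ∀ x ∈ Ioc (0:ℝ) 1, g x ≠ 0 ∨ (0:ℝ) ≤ β - 1 := fun x hx => Or.inl (hgpos x hx).ne'
    have hfa : ContinuousOn (fun t => f t ^ α) (Ioc (0:ℝ) 1) :=
      hfC.rpow_const (fun x hx => Or.inl (hfpos x hx).ne')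
    have hfa1 : ContinuousOn (fun t => f t ^ (α-1)) (Ioc (0:ℝ) 1) := hfC.rpow_const hfne
    have hgb : ContinuousOn (fun t => g t ^ β) (Ioc (0:ℝ) 1) :=
      hgC.rpow_const (fun x hx => Or.inl (hgpos x hx).ne')
    have hgb1 : ContinuousOn (fun t => g t ^ (β-1)) (Ioc (0:ℝ) 1) := hgC.rpow_const hgne
    rw [hWdef, hφdef, hφ₁def]
    exact ((((hfa1.mul hf₁C).mul hgb).const_smul α |>.add
        (((hfa.mul hgb1).mul hg₁C).const_smul β)).mul hhC).sub ((hfa.mul hgb).mul hh₁C)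
  -- W is antitone on Ioc 0 1
  have hWanti : ∀ s ∈ Ioc (0:ℝ) 1, ∀ t ∈ Ioc (0:ℝ) 1, s ≤ t → W t ≤ W s := by
    intro s hs t ht hst
    rcases eq_or_lt_of_le hst with rfl | hlt
    · exact le_refl _
    have hsubIoc : Icc s t ⊆ Ioc (0:ℝ) 1 := fun y hy => ⟨lt_of_lt_of_le hs.1 hy.1, le_trans hy.2 ht.2⟩
    have hint : interior (Icc s t) = Ioo s t := interior_Icc
    have hIooSub : Ioo s t ⊆ Ioo (0:ℝ) 1 := fun y hy => ⟨lt_trans hs.1 hy.1, lt_of_lt_of_le hy.2 ht.2⟩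
    have hanti : AntitoneOn W (Icc s t) := by
      apply antitoneOn_of_deriv_nonpos (convex_Icc s t) (hWc.mono hsubIoc)
      · intro y hy
        rw [hint] at hy
        obtain ⟨d, hd0, hd⟩ := hWd y (hIooSub hy)
        exact hd.differentiableAt.differentiableWithinAt
      · intro y hy
        rw [hint] at hy
        obtain ⟨d, hd0, hd⟩ := hWd y (hIooSub hy)
        rw [hd.deriv]
        exact hd0
    exact hanti (left_mem_Icc.mpr hst) (right_mem_Icc.mpr hst) hst
  -- slope limits at 0
  haveI := sturm_nebot
  have hslf : Tendsto (fun t => f t / t) (𝓝[Ioc (0:ℝ) 1] 0) (𝓝 (f₁ 0)) :=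
    sturm_slope f f₁ (hfd1 0 ⟨le_refl 0, zero_le_one⟩) hf0
  have hslg : Tendsto (fun t => g t / t) (𝓝[Ioc (0:ℝ) 1] 0) (𝓝 (g₁ 0)) :=
    sturm_slope g g₁ (hgd1 0 ⟨le_refl 0, zero_le_one⟩) hg0
  have hslh : Tendsto (fun t => h t / t) (𝓝[Ioc (0:ℝ) 1] 0) (𝓝 (h₁ 0)) :=
    sturm_slope h h₁ (hhd1 0 ⟨le_refl 0, zero_le_one⟩) hh0
  have hmono : 𝓝[Ioc (0:ℝ) 1] (0:ℝ) ≤ 𝓝[Icc (0:ℝ) 1] 0 := nhdsWithin_mono 0 Ioc_subset_Icc_self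
  have h0mem : (0:ℝ) ∈ Icc (0:ℝ) 1 := ⟨le_refl 0, zero_le_one⟩
  have htf₁ : Tendsto f₁ (𝓝[Ioc (0:ℝ) 1] 0) (𝓝 (f₁ 0)) :=
    ((hf₁c 0 h0mem).tendsto).mono_left hmono
  have htg₁ : Tendsto g₁ (𝓝[Ioc (0:ℝ) 1] 0) (𝓝 (g₁ 0)) :=
    ((hg₁c 0 h0mem).tendsto).mono_left hmono
  have hth₁ : Tendsto h₁ (𝓝[Ioc (0:ℝ) 1] 0) (𝓝 (h₁ 0)) :=
    ((hh₁c 0 h0mem).tendsto).mono_left hmono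
  have htid : Tendsto (fun t : ℝ => t) (𝓝[Ioc (0:ℝ) 1] 0) (𝓝 0) :=
    tendsto_id.mono_left nhdsWithin_le_nhds
  -- limit of W at 0 is 0
  have hWtend : Tendsto W (𝓝[Ioc (0:ℝ) 1] 0) (𝓝 0) := by
    -- φ * h₁ term
    have htf : Tendsto f (𝓝[Ioc (0:ℝ) 1] 0) (𝓝 0) := by
      have := ((hfc 0 h0mem).tendsto).mono_left hmono
      rwa [hf0] at this
    have htg : Tendsto g (𝓝[Ioc (0:ℝ) 1] 0) (𝓝 0) := by
      have := ((hgc 0 h0mem).tendsto).mono_left hmono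
      rwa [hg0] at this
    have htφ : Tendsto φ (𝓝[Ioc (0:ℝ) 1] 0) (𝓝 0) := by
      rw [hφdef]
      have h1 : Tendsto (fun t => f t ^ α) (𝓝[Ioc (0:ℝ) 1] 0) (𝓝 ((0:ℝ) ^ α)) :=
        htf.rpow_const (Or.inr hα.le)
      have h2 : Tendsto (fun t => g t ^ β) (𝓝[Ioc (0:ℝ) 1] 0) (𝓝 ((0:ℝ) ^ β)) :=
        htg.rpow_const (Or.inr hβ.le)
      rw [Real.zero_rpow hα.ne'] at h1
      rw [Real.zero_rpow hβ.ne'] at h2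
      have := h1.mul h2
      rwa [mul_zero] at this
    have ht1 : Tendsto (fun t => φ t * h₁ t) (𝓝[Ioc (0:ℝ) 1] 0) (𝓝 0) := by
      have := htφ.mul hth₁
      rwa [zero_mul] at this
    -- φ₁ * h term via slopes
    set E : ℝ → ℝ := fun t => α * f₁ t * ((f t/t) ^ (α-1) * ((g t/t) ^ β * (h t/t * t)))
        + β * g₁ t * ((g t/t) ^ (β-1) * ((f t/t) ^ α * (h t/t * t))) with hEdef
    have htE : Tendsto E (𝓝[Ioc (0:ℝ) 1] 0)
        (𝓝 (α * f₁ 0 * ((f₁ 0) ^ (α-1) * ((g₁ 0) ^ β * (h₁ 0 * 0)))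
          + β * g₁ 0 * ((g₁ 0) ^ (β-1) * ((f₁ 0) ^ α * (h₁ 0 * 0))))) := by
      rw [hEdef]
      exact (((tendsto_const_nhds.mul htf₁).mul
          ((hslf.rpow_const (Or.inl hf₁0.ne')).mul
            ((hslg.rpow_const (Or.inl hg₁0.ne')).mul (hslh.mul htid)))).add
        (((tendsto_const_nhds.mul htg₁).mul
          ((hslg.rpow_const (Or.inl hg₁0.ne')).mul
            ((hslf.rpow_const (Or.inl hf₁0.ne')).mul (hslh.mul htid))))))
    have htE0 : Tendsto E (𝓝[Ioc (0:ℝ) 1] 0) (𝓝 0) := by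
      convert htE using 2
      ring
    have hEeq : ∀ᶠ t in 𝓝[Ioc (0:ℝ) 1] 0, E t = φ₁ t * h t := by
      filter_upwards [self_mem_nhdsWithin] with t ht
      have ht0 : 0 < t := ht.1
      have hF : 0 < f t := hfpos t ht
      have hG : 0 < g t := hgpos t ht
      have hH : 0 < h t := hhpos t ht
      have hp1 : t ^ (α-1) * t ^ β = 1 := by
        rw [← Real.rpow_add ht0, show α - 1 + β = 0 by linarith, Real.rpow_zero]
      have hp2 : t ^ (β-1) * t ^ α = 1 := by
        rw [← Real.rpow_add ht0, show β - 1 + α = 0 by linarith, Real.rpow_zero]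
      have k1 : (f t/t) ^ (α-1) * ((g t/t) ^ β * (h t/t * t)) = f t ^ (α-1) * g t ^ β * h t := by
        rw [Real.div_rpow hF.le ht0.le, Real.div_rpow hG.le ht0.le, div_mul_cancel₀ _ ht0.ne']
        rw [show f t ^ (α-1) / t ^ (α-1) * (g t ^ β / t ^ β * h t)
            = f t ^ (α-1) * g t ^ β * h t / (t ^ (α-1) * t ^ β) by ring, hp1, div_one]
      have k2 : (g t/t) ^ (β-1) * ((f t/t) ^ α * (h t/t * t)) = g t ^ (β-1) * f t ^ α * h t := by
        rw [Real.div_rpow hG.le ht0.le, Real.div_rpow hF.le ht0.le, div_mul_cancel₀ _ ht0.ne']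
        rw [show g t ^ (β-1) / t ^ (β-1) * (f t ^ α / t ^ α * h t)
            = g t ^ (β-1) * f t ^ α * h t / (t ^ (β-1) * t ^ α) by ring, hp2, div_one]
      rw [hEdef]
      simp only [hφ₁def]
      rw [k1, k2]
      ring
    have ht2 : Tendsto (fun t => φ₁ t * h t) (𝓝[Ioc (0:ℝ) 1] 0) (𝓝 0) :=
      htE0.congr' hEeq
    rw [hWdef]
    have := ht2.sub ht1
    rwa [sub_zero] at this
  -- W ≤ 0 on Ioc 0 1
  have hWle : ∀ t ∈ Ioc (0:ℝ) 1, W t ≤ 0 := by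
    intro t ht
    refine ge_of_tendsto hWtend ?_
    filter_upwards [self_mem_nhdsWithin,
      eventually_nhdsWithin_of_eventually_nhds (Filter.Tendsto.eventually_lt_const ht.1 tendsto_id)]
      with s hs hst
    exact hWanti s hs t ht hst.le
  -- φ positive and φ 1 = 1
  have hφpos : ∀ t ∈ Ioc (0:ℝ) 1, 0 < φ t := fun t ht =>
    mul_pos (Real.rpow_pos_of_pos (hfpos t ht) α) (Real.rpow_pos_of_pos (hgpos t ht) β)
  have hφ1 : φ 1 = 1 := by simp [hφdef, hf1, hg1]
  have hφcont : ContinuousOn φ (Ioc (0:ℝ) 1) := by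
    rw [hφdef]
    exact ((hfc.mono Ioc_subset_Icc_self).rpow_const
        (fun x hx => Or.inl (hfpos x hx).ne')).mul
      ((hgc.mono Ioc_subset_Icc_self).rpow_const (fun x hx => Or.inl (hgpos x hx).ne'))
  -- h ≤ φ on Ioc
  have hhφ : ∀ t ∈ Ioc (0:ℝ) 1, h t ≤ φ t := by
    intro t ht
    rcases eq_or_lt_of_le ht.2 with h1 | hlt
    · rw [h1, hh1, hφ1]
    set R : ℝ → ℝ := fun s => h s / φ s with hRdef
    have hsubIoc : Icc t 1 ⊆ Ioc (0:ℝ) 1 := fun y hy => ⟨lt_of_lt_of_le ht.1 hy.1, hy.2⟩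
    have hRc : ContinuousOn R (Icc t 1) := by
      rw [hRdef]
      exact ((hhc.mono Ioc_subset_Icc_self).mono hsubIoc).div (hφcont.mono hsubIoc)
        (fun y hy => (hφpos y (hsubIoc hy)).ne')
    have hRmono : MonotoneOn R (Icc t 1) := by
      have hRd : ∀ y ∈ Ioo t 1, HasDerivAt R
          ((h₁ y * φ y - h y * φ₁ y) / φ y ^ 2) y := by
        intro y hy
        have hyO : y ∈ Ioo (0:ℝ) 1 := ⟨lt_trans ht.1 hy.1, hy.2⟩
        obtain ⟨_, _, _, _, hhy, _⟩ := hDeriv y hyO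
        rw [hRdef]
        exact hhy.div (hφderiv y hyO) (hφpos y ⟨hyO.1, hyO.2.le⟩).ne'
      apply monotoneOn_of_deriv_nonneg (convex_Icc t 1) hRc
      · intro y hy
        rw [interior_Icc] at hy
        exact (hRd y hy).differentiableAt.differentiableWithinAt
      · intro y hy
        rw [interior_Icc] at hy
        rw [(hRd y hy).deriv]
        have hyO : y ∈ Ioc (0:ℝ) 1 := ⟨lt_trans ht.1 hy.1, hy.2.le⟩
        have hWy := hWle y hyO
        rw [hWdef] at hWy
        apply div_nonneg _ (sq_nonneg _)
        rw [show h₁ y * φ y - h y * φ₁ y = -(φ₁ y * h y - φ y * h₁ y) by ring]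
        exact neg_nonneg.mpr hWy
    have h1m : (1:ℝ) ∈ Icc t 1 := right_mem_Icc.mpr ht.2
    have htm : t ∈ Icc t 1 := left_mem_Icc.mpr ht.2
    have := hRmono htm h1m ht.2
    rw [hRdef] at this
    simp only [hh1, hφ1, div_one] at this
    exact (div_le_one (hφpos t ht)).mp this
  -- conclusion
  intro t ht
  rcases eq_or_lt_of_le ht.1 with h0 | h0
  · rw [← h0, hh0, hf0, hg0, Real.zero_rpow hS.ne', Real.zero_rpow hN.ne',
      Real.zero_rpow hN'.ne', mul_zero]
  have htO : t ∈ Ioc (0:ℝ) 1 := ⟨h0, ht.2⟩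
  have hle := Real.rpow_le_rpow (hhpos t htO).le (hhφ t htO) hS.le
  refine le_trans hle (le_of_eq ?_)
  have hFnn : (0:ℝ) ≤ f t := (hfpos t htO).le
  have hGnn : (0:ℝ) ≤ g t := (hgpos t htO).le
  simp only [hφdef]
  rw [Real.mul_rpow (Real.rpow_nonneg hFnn α) (Real.rpow_nonneg hGnn β),
    ← Real.rpow_mul hFnn, ← Real.rpow_mul hGnn,
    show α * (N + N') = N by rw [hαdef]; field_simp,
    show β * (N + N') = N' by rw [hβdef]; field_simp]
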